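/- Best-case inner and middle problem (Proposition 2.1): Let s₁, …, s_N ∈ ℝⁿ with empirical measure Q_N, sample mean s̄ and empirical covariance Σ. Let φ ∈ ℝⁿ with φ ≠ 0, let δ > 0, let α₀ ∈ ℝ, put μ̄ = φ·s̄ and assume μ̄ ≥ α₀. Then the minimum over all α ≥ α₀ with (α − μ̄)² ≤ δ·‖φ‖₂² of the quantity inf{ E^Q[(φ·S)²] − α² : Q ∈ U_δ(Q_N), E^Q[φ·S] = α } equals max(√(φᵀΣφ) − √δ·‖φ‖₂, 0)², and the outer minimum is attained at α* = μ̄. -/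

import Mathlib

open MeasureTheory
open scoped ENNReal BigOperators

/-- Euclidean dot product on `Fin n → ℝ`. -/
noncomputable def eDot {n : ℕ} (a b : Fin n → ℝ) : ℝ := ∑ i, a i * b i

/-- Transport cost of a coupling `π` for the quadratic cost `c(u,v) = ‖u − v‖₂²`. -/
noncomputable def transportCost {n : ℕ}
    (π : Measure ((Fin n → ℝ) × (Fin n → ℝ))) : ℝ≥0∞ :=
  ∫⁻ p, ENNReal.ofReal (∑ i, (p.1 i - p.2 i) ^ 2) ∂π

/-- Optimal transport cost `D_c(Q, Q')` with quadratic cost `c(u,v) = ‖u − v‖₂²`. -/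
noncomputable def otCost {n : ℕ} (Q Q' : Measure (Fin n → ℝ)) : ℝ≥0∞ :=
  sInf { r | ∃ π : Measure ((Fin n → ℝ) × (Fin n → ℝ)),
      IsProbabilityMeasure π ∧ π.map Prod.fst = Q ∧ π.map Prod.snd = Q' ∧
      r = transportCost π }

/-- Empirical measure `Q_N = (1/N)·Σᵢ δ_{sᵢ}` of the sample points `s₁, …, s_N`. -/
noncomputable def empiricalMeasure {n N : ℕ} (s : Fin N → (Fin n → ℝ)) :
    Measure (Fin n → ℝ) :=
  (N : ℝ≥0∞)⁻¹ • ∑ i, Measure.dirac (s i)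


/-- Optimal value of the best-case inner problem:
`inf{ E^Q[(φ·S)²] − α² : Q ∈ U_δ(Q_N), E^Q[φ·S] = α }`. -/
noncomputable def innerBest {n N : ℕ} (s : Fin N → (Fin n → ℝ))
    (φ : Fin n → ℝ) (δ α : ℝ) : ℝ :=
  sInf { v | ∃ Q : Measure (Fin n → ℝ), IsProbabilityMeasure Q ∧
      otCost Q (empiricalMeasure s) ≤ ENNReal.ofReal δ ∧
      Integrable (fun x => eDot φ x) Q ∧ Integrable (fun x => (eDot φ x) ^ 2) Q ∧
      (∫ x, eDot φ x ∂Q) = α ∧ v = (∫ x, (eDot φ x) ^ 2 ∂Q) - α ^ 2 }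


section EmpAux

variable {α : Type*} [MeasurableSpace α] {β : Type*} [MeasurableSpace β] {N : ℕ}

/-- generic empirical measure -/
noncomputable def myEmp (p : Fin N → α) : Measure α :=
  (N : ℝ≥0∞)⁻¹ • ∑ i, Measure.dirac (p i)

lemma myEmp_lintegral (p : Fin N → α) {f : α → ℝ≥0∞} (hf : Measurable f) :
    ∫⁻ x, f x ∂(myEmp p) = (N : ℝ≥0∞)⁻¹ * ∑ i, f (p i) := by
  rw [myEmp, lintegral_smul_measure, lintegral_finset_sum_measure]
  simp only [lintegral_dirac' _ hf]
  rw [smul_eq_mul]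

lemma myEmp_prob (hN : 0 < N) (p : Fin N → α) : IsProbabilityMeasure (myEmp p) := by
  constructor
  have h : ∫⁻ _, (1 : ℝ≥0∞) ∂(myEmp p) = (N : ℝ≥0∞)⁻¹ * ∑ _i : Fin N, 1 :=
    myEmp_lintegral p measurable_const
  simpa [ENNReal.inv_mul_cancel (by exact_mod_cast hN.ne' : (N : ℝ≥0∞) ≠ 0)
    (by simp : (N : ℝ≥0∞) ≠ ⊤)] using h

lemma myEmp_integrable (hN : 0 < N) (p : Fin N → α) {f : α → ℝ} (hf : Measurable f) :
    Integrable f (myEmp p) := by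
  refine ⟨hf.aestronglyMeasurable, ?_⟩
  rw [HasFiniteIntegral, myEmp_lintegral p hf.enorm]
  refine ENNReal.mul_lt_top ?_ ?_
  · simp only [ENNReal.inv_lt_top]; exact_mod_cast hN
  · exact (ENNReal.sum_lt_top.mpr fun i _ => enorm_lt_top)

lemma myEmp_integral (p : Fin N → α) {f : α → ℝ} (hf : Measurable f) :
    ∫ x, f x ∂(myEmp p) = (N : ℝ)⁻¹ * ∑ i, f (p i) := by
  rw [myEmp, integral_smul_measure, integral_finset_sum_measure
    (fun i _ => ⟨hf.aestronglyMeasurable, by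
      rw [HasFiniteIntegral, lintegral_dirac' _ hf.enorm]
      exact enorm_lt_top⟩)]
  simp only [integral_dirac' _ _ hf.stronglyMeasurable]
  rw [ENNReal.toReal_inv, smul_eq_mul]
  norm_num

lemma myEmp_map (p : Fin N → α) {g : α → β} (hg : Measurable g) :
    (myEmp p).map g = myEmp (g ∘ p) := by
  ext A hA
  rw [Measure.map_apply hg hA]
  simp only [myEmp, Measure.smul_apply, Measure.finset_sum_apply, smul_eq_mul]
  congr 1
  refine Finset.sum_congr rfl fun i _ => ?_
  rw [Measure.dirac_apply' _ (hg hA), Measure.dirac_apply' _ hA]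
  by_cases h : g (p i) ∈ A <;> simp [Set.indicator_apply, Set.mem_preimage, h]

end EmpAux

section IntAux

variable {α : Type*} [MeasurableSpace α] {μ : Measure α}

lemma myCS [IsFiniteMeasure μ] {u v : α → ℝ}
    (hu : AEStronglyMeasurable u μ) (hv : AEStronglyMeasurable v μ)
    (hu2 : Integrable (fun a => u a ^ 2) μ) (hv2 : Integrable (fun a => v a ^ 2) μ) :
    ∫ a, u a * v a ∂μ ≤ Real.sqrt (∫ a, u a ^ 2 ∂μ) * Real.sqrt (∫ a, v a ^ 2 ∂μ) := by
  have h1 : ∫ a, u a * v a ∂μ ≤ ∫ a, |u a| * |v a| ∂μ := by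
    calc ∫ a, u a * v a ∂μ ≤ |∫ a, u a * v a ∂μ| := le_abs_self _
    _ ≤ ∫ a, |u a| * |v a| ∂μ := by
        simpa [Real.norm_eq_abs, abs_mul] using
          norm_integral_le_integral_norm (μ := μ) (fun a => u a * v a)
  have hpq : Real.HolderConjugate 2 2 := Real.holderConjugate_iff_eq_conjExponent (by norm_num) |>.mpr (by norm_num)
  have hmu : MemLp (fun a => |u a|) (ENNReal.ofReal 2) μ := by
    rw [show ENNReal.ofReal 2 = (2 : ℝ≥0∞) by norm_num]
    refine (memLp_two_iff_integrable_sq (by simpa [Real.norm_eq_abs] using hu.norm : AEStronglyMeasurable (fun a => |u a|) μ)).mpr ?_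
    simpa [sq_abs] using hu2
  have hmv : MemLp (fun a => |v a|) (ENNReal.ofReal 2) μ := by
    rw [show ENNReal.ofReal 2 = (2 : ℝ≥0∞) by norm_num]
    refine (memLp_two_iff_integrable_sq (by simpa [Real.norm_eq_abs] using hv.norm : AEStronglyMeasurable (fun a => |v a|) μ)).mpr ?_
    simpa [sq_abs] using hv2
  have h2 := integral_mul_le_Lp_mul_Lq_of_nonneg hpq
    (Filter.Eventually.of_forall fun a => abs_nonneg (u a))
    (Filter.Eventually.of_forall fun a => abs_nonneg (v a)) hmu hmv
  have e1 : ∫ a, |u a| ^ (2:ℝ) ∂μ = ∫ a, u a ^ 2 ∂μ := by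
    refine integral_congr_ae (Filter.Eventually.of_forall fun a => ?_)
    show |u a| ^ (2:ℝ) = u a ^ 2
    rw [show ((2:ℝ)) = ((2:ℕ):ℝ) by norm_num, Real.rpow_natCast, sq_abs]
  have e2 : ∫ a, |v a| ^ (2:ℝ) ∂μ = ∫ a, v a ^ 2 ∂μ := by
    refine integral_congr_ae (Filter.Eventually.of_forall fun a => ?_)
    show |v a| ^ (2:ℝ) = v a ^ 2
    rw [show ((2:ℝ)) = ((2:ℕ):ℝ) by norm_num, Real.rpow_natCast, sq_abs]
  rw [e1, e2] at h2
  calc ∫ a, u a * v a ∂μ ≤ ∫ a, |u a| * |v a| ∂μ := h1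
  _ ≤ (∫ a, u a ^ 2 ∂μ) ^ (1/2:ℝ) * (∫ a, v a ^ 2 ∂μ) ^ (1/2:ℝ) := h2
  _ = _ := by
      rw [Real.sqrt_eq_rpow, Real.sqrt_eq_rpow]

end IntAux

section IntAux2

variable {α : Type*} [MeasurableSpace α] {μ : Measure α}

/-- expansion of `∫ (w − r)²` over a probability measure -/
lemma expand_sq [IsProbabilityMeasure μ] {w : α → ℝ} (hw : Integrable w μ)
    (hw2 : Integrable (fun a => w a ^ 2) μ) (r : ℝ) :
    ∫ a, (w a - r) ^ 2 ∂μ = (∫ a, w a ^ 2 ∂μ) - 2 * r * (∫ a, w a ∂μ) + r ^ 2 := by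
  have h : ∀ a, (w a - r) ^ 2 = w a ^ 2 - (2 * r) * w a + r ^ 2 := fun a => by ring
  simp_rw [h]
  have i1 : Integrable (fun a => w a ^ 2 - 2 * r * w a) μ := hw2.sub (hw.const_mul (2*r))
  rw [integral_add i1 (integrable_const _),
    integral_sub hw2 (hw.const_mul (2*r)), integral_const_mul, integral_const]
  simp only [probReal_univ, smul_eq_mul, one_mul]

lemma var_nonneg [IsProbabilityMeasure μ] {w : α → ℝ} (hw : Integrable w μ)
    (hw2 : Integrable (fun a => w a ^ 2) μ) :
    (∫ a, w a ∂μ) ^ 2 ≤ ∫ a, w a ^ 2 ∂μ := by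
  have h := expand_sq hw hw2 (∫ a, w a ∂μ)
  have h2 : 0 ≤ ∫ a, (w a - ∫ a, w a ∂μ) ^ 2 ∂μ := integral_nonneg fun a => sq_nonneg _
  nlinarith [h, h2]

/-- L² triangle inequality for integrals -/
lemma myTri [IsFiniteMeasure μ] {u v : α → ℝ}
    (hu : AEStronglyMeasurable u μ) (hv : AEStronglyMeasurable v μ)
    (hu2 : Integrable (fun a => u a ^ 2) μ) (hv2 : Integrable (fun a => v a ^ 2) μ) :
    Real.sqrt (∫ a, (u a + v a) ^ 2 ∂μ) ≤
      Real.sqrt (∫ a, u a ^ 2 ∂μ) + Real.sqrt (∫ a, v a ^ 2 ∂μ) := by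
  have huv : Integrable (fun a => u a * v a) μ := by
    have ig : Integrable (fun a => 1/2 * (u a ^ 2 + v a ^ 2)) μ := (hu2.add hv2).const_mul (1/2)
    refine Integrable.mono' ig (hu.mul hv) ?_
    refine Filter.Eventually.of_forall fun a => ?_
    rw [Real.norm_eq_abs, abs_le]
    constructor <;> nlinarith [sq_nonneg (u a - v a), sq_nonneg (u a + v a)]
  have hexp : ∫ a, (u a + v a) ^ 2 ∂μ
      = (∫ a, u a ^ 2 ∂μ) + 2 * (∫ a, u a * v a ∂μ) + (∫ a, v a ^ 2 ∂μ) := by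
    have h : ∀ a, (u a + v a) ^ 2 = u a ^ 2 + 2 * (u a * v a) + v a ^ 2 := fun a => by ring
    simp_rw [h]
    have i1 : Integrable (fun a => u a ^ 2 + 2 * (u a * v a)) μ := hu2.add (huv.const_mul 2)
    rw [integral_add i1 hv2, integral_add hu2 (huv.const_mul 2), integral_const_mul]
  have hcs := myCS hu hv hu2 hv2
  have h1 : 0 ≤ ∫ a, u a ^ 2 ∂μ := integral_nonneg fun a => sq_nonneg _
  have h2 : 0 ≤ ∫ a, v a ^ 2 ∂μ := integral_nonneg fun a => sq_nonneg _
  have key : ∫ a, (u a + v a) ^ 2 ∂μ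
      ≤ (Real.sqrt (∫ a, u a ^ 2 ∂μ) + Real.sqrt (∫ a, v a ^ 2 ∂μ)) ^ 2 := by
    rw [hexp, add_sq, Real.sq_sqrt h1, Real.sq_sqrt h2]
    nlinarith [hcs]
  calc Real.sqrt (∫ a, (u a + v a) ^ 2 ∂μ)
      ≤ Real.sqrt ((Real.sqrt (∫ a, u a ^ 2 ∂μ) + Real.sqrt (∫ a, v a ^ 2 ∂μ)) ^ 2) :=
        Real.sqrt_le_sqrt key
    _ = _ := Real.sqrt_sq (by positivity)

lemma sqrt_add_le' {a b : ℝ} (ha : 0 ≤ a) (hb : 0 ≤ b) :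
    Real.sqrt (a + b) ≤ Real.sqrt a + Real.sqrt b := by
  calc Real.sqrt (a + b) ≤ Real.sqrt ((Real.sqrt a + Real.sqrt b) ^ 2) := by
        refine Real.sqrt_le_sqrt ?_
        nlinarith [Real.sq_sqrt ha, Real.sq_sqrt hb, Real.sqrt_nonneg a, Real.sqrt_nonneg b]
    _ = _ := Real.sqrt_sq (by positivity)

end IntAux2

section Prob

variable {n N : ℕ}

noncomputable def mubar (s : Fin N → (Fin n → ℝ)) (φ : Fin n → ℝ) : ℝ :=
  (N : ℝ)⁻¹ * ∑ i, eDot φ (s i)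

noncomputable def Vemp (s : Fin N → (Fin n → ℝ)) (φ : Fin n → ℝ) : ℝ :=
  (N : ℝ)⁻¹ * ∑ i, (eDot φ (s i) - mubar s φ) ^ 2

variable (s : Fin N → (Fin n → ℝ)) (φ : Fin n → ℝ)

lemma measurable_eDot : Measurable (fun x : Fin n → ℝ => eDot φ x) := by
  unfold eDot
  exact Finset.measurable_sum _ fun i _ => measurable_const.mul (measurable_pi_apply i)

lemma nsq_pos (hφ : φ ≠ 0) : 0 < ∑ i, φ i ^ 2 := by
  obtain ⟨j, hj⟩ := Function.ne_iff.mp hφ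
  exact Finset.sum_pos' (fun i _ => sq_nonneg _)
    ⟨j, Finset.mem_univ j, by have : φ j ≠ 0 := hj; positivity⟩

lemma Vemp_nonneg : 0 ≤ Vemp s φ := by
  unfold Vemp; positivity

lemma sum_dev (hN : 0 < N) : ∑ i, (eDot φ (s i) - mubar s φ) = 0 := by
  have hNr : (N : ℝ) ≠ 0 := Nat.cast_ne_zero.mpr hN.ne'
  rw [Finset.sum_sub_distrib, Finset.sum_const, Finset.card_univ, Fintype.card_fin]
  rw [mubar]
  rw [nsmul_eq_mul, ← mul_assoc, mul_inv_cancel₀ hNr, one_mul, sub_self]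

lemma quad (hN : 0 < N) (a c : ℝ) :
    (N : ℝ)⁻¹ * ∑ i, (a + c * (eDot φ (s i) - mubar s φ)) ^ 2 = a ^ 2 + c ^ 2 * Vemp s φ := by
  have hNr : (N : ℝ) ≠ 0 := Nat.cast_ne_zero.mpr hN.ne'
  have e1 : ∑ i, (a + c * (eDot φ (s i) - mubar s φ)) ^ 2
      = (N : ℝ) * a ^ 2 + (2 * a * c) * ∑ i, (eDot φ (s i) - mubar s φ)
        + c ^ 2 * ∑ i, (eDot φ (s i) - mubar s φ) ^ 2 := by
    calc ∑ i, (a + c * (eDot φ (s i) - mubar s φ)) ^ 2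
        = ∑ i, (a ^ 2 + (2 * a * c) * (eDot φ (s i) - mubar s φ)
            + c ^ 2 * (eDot φ (s i) - mubar s φ) ^ 2) :=
          Finset.sum_congr rfl fun i _ => by ring
      _ = (∑ i, (a ^ 2 + (2 * a * c) * (eDot φ (s i) - mubar s φ)))
            + ∑ i, c ^ 2 * (eDot φ (s i) - mubar s φ) ^ 2 := Finset.sum_add_distrib
      _ = ((∑ _i : Fin N, a ^ 2) + ∑ i, (2 * a * c) * (eDot φ (s i) - mubar s φ))
            + ∑ i, c ^ 2 * (eDot φ (s i) - mubar s φ) ^ 2 := by rw [Finset.sum_add_distrib]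
      _ = _ := by
          rw [Finset.sum_const, Finset.card_univ, Fintype.card_fin, ← Finset.mul_sum,
            ← Finset.mul_sum, nsmul_eq_mul]
  rw [e1, sum_dev s φ hN, Vemp]
  field_simp
  ring

lemma lin (hN : 0 < N) (A B : ℝ) :
    (N : ℝ)⁻¹ * ∑ i, (A + B * (eDot φ (s i) - mubar s φ)) = A := by
  have hNr : (N : ℝ) ≠ 0 := Nat.cast_ne_zero.mpr hN.ne'
  rw [Finset.sum_add_distrib, ← Finset.mul_sum, sum_dev s φ hN, Finset.sum_const,
    Finset.card_univ, Fintype.card_fin, nsmul_eq_mul]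
  field_simp
  ring

/-- Construction of a feasible measure: empirical measure of affinely shifted points. -/
lemma construct (hN : 0 < N) (hφ : φ ≠ 0) (δ a c : ℝ) (hδ : 0 ≤ δ)
    (hcost : a ^ 2 + c ^ 2 * Vemp s φ ≤ δ * ∑ i, φ i ^ 2) :
    ∃ Q : Measure (Fin n → ℝ), IsProbabilityMeasure Q ∧
      otCost Q (empiricalMeasure s) ≤ ENNReal.ofReal δ ∧
      Integrable (fun x => eDot φ x) Q ∧ Integrable (fun x => (eDot φ x) ^ 2) Q ∧
      (∫ x, eDot φ x ∂Q) = mubar s φ + a ∧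
      (∫ x, (eDot φ x) ^ 2 ∂Q) = (mubar s φ + a) ^ 2 + (1 + c) ^ 2 * Vemp s φ := by
  set nsq : ℝ := ∑ i, φ i ^ 2 with hnsq_def
  have hnsq : 0 < nsq := nsq_pos φ hφ
  set T : (Fin n → ℝ) → (Fin n → ℝ) :=
    fun x j => x j + ((a + c * (eDot φ x - mubar s φ)) / nsq) * φ j with hT_def
  have hTmeas : Measurable T := by
    refine measurable_pi_lambda _ fun j => ?_
    exact (measurable_pi_apply j).add
      ((((measurable_const.add (measurable_const.mul
        ((measurable_eDot φ).sub measurable_const))).div_const nsq)).mul_const (φ j))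
  have heT : ∀ x, eDot φ (T x) = mubar s φ + a + (1 + c) * (eDot φ x - mubar s φ) := by
    intro x
    have e : eDot φ (T x) = eDot φ x + ((a + c * (eDot φ x - mubar s φ)) / nsq) * nsq := by
      simp only [eDot, hT_def, hnsq_def]
      rw [Finset.mul_sum, ← Finset.sum_add_distrib]
      exact Finset.sum_congr rfl fun j _ => by ring
    rw [e]
    field_simp
    ring
  have hdist : ∀ x, ∑ j, (T x j - x j) ^ 2
      = (a + c * (eDot φ x - mubar s φ)) ^ 2 / nsq := by
    intro x
    have e : ∀ j, (T x j - x j) ^ 2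
        = ((a + c * (eDot φ x - mubar s φ)) / nsq) ^ 2 * φ j ^ 2 := fun j => by
      simp only [hT_def]; ring
    rw [Finset.sum_congr rfl fun j _ => e j, ← Finset.mul_sum, ← hnsq_def]
    field_simp
  refine ⟨myEmp (fun i => T (s i)), myEmp_prob hN _, ?_, myEmp_integrable hN _ (measurable_eDot φ),
    myEmp_integrable hN _ ((measurable_eDot φ).pow_const 2), ?_, ?_⟩
  · -- transport cost bound
    set π : Measure ((Fin n → ℝ) × (Fin n → ℝ)) := myEmp (fun i => (T (s i), s i)) with hπ_def
    have hπprob : IsProbabilityMeasure π := myEmp_prob hN _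
    have hfst : π.map Prod.fst = myEmp (fun i => T (s i)) := by
      rw [hπ_def, myEmp_map _ measurable_fst]; rfl
    have hsnd : π.map Prod.snd = empiricalMeasure s := by
      rw [hπ_def, myEmp_map _ measurable_snd]; rfl
    have hcmeas : Measurable (fun p : (Fin n → ℝ) × (Fin n → ℝ) =>
        ENNReal.ofReal (∑ j, (p.1 j - p.2 j) ^ 2)) := by
      refine ENNReal.measurable_ofReal.comp (Finset.measurable_sum _ fun j _ => ?_)
      exact (((measurable_pi_apply j).comp measurable_fst).sub
        ((measurable_pi_apply j).comp measurable_snd)).pow_const 2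
    have htc : transportCost π ≤ ENNReal.ofReal δ := by
      rw [transportCost, myEmp_lintegral _ hcmeas]
      have hNinv : (N : ℝ≥0∞)⁻¹ = ENNReal.ofReal ((N : ℝ)⁻¹) := by
        rw [← ENNReal.ofReal_natCast N, ← ENNReal.ofReal_inv_of_pos (by exact_mod_cast hN)]
      have hterm : ∀ i : Fin N, (∑ j, (((T (s i), s i) : (Fin n → ℝ) × (Fin n → ℝ)).1 j
          - ((T (s i), s i) : (Fin n → ℝ) × (Fin n → ℝ)).2 j) ^ 2)
          = (a + c * (eDot φ (s i) - mubar s φ)) ^ 2 / nsq := fun i => hdist (s i)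
      simp only [hterm]
      rw [hNinv, ← ENNReal.ofReal_sum_of_nonneg (fun i _ => by positivity),
        ← ENNReal.ofReal_mul (by positivity)]
      refine ENNReal.ofReal_le_ofReal ?_
      rw [← Finset.sum_div,
        show (N : ℝ)⁻¹ * ((∑ i, (a + c * (eDot φ (s i) - mubar s φ)) ^ 2) / nsq)
          = ((N : ℝ)⁻¹ * ∑ i, (a + c * (eDot φ (s i) - mubar s φ)) ^ 2) / nsq from by ring,
        quad s φ hN]
      exact (div_le_iff₀ hnsq).mpr hcost
    exact le_trans (sInf_le ⟨π, hπprob, hfst, hsnd, rfl⟩) htc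
  · rw [myEmp_integral _ (measurable_eDot φ)]
    have : ∀ i : Fin N, eDot φ (T (s i))
        = (mubar s φ + a) + (1 + c) * (eDot φ (s i) - mubar s φ) := fun i => heT (s i)
    rw [Finset.sum_congr rfl fun i _ => this i, lin s φ hN]
  · rw [myEmp_integral _ ((measurable_eDot φ).pow_const 2)]
    have : ∀ i : Fin N, (eDot φ (T (s i))) ^ 2
        = ((mubar s φ + a) + (1 + c) * (eDot φ (s i) - mubar s φ)) ^ 2 := fun i => by
      rw [heT (s i)]
    rw [Finset.sum_congr rfl fun i _ => this i, quad s φ hN]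

end Prob

section Lower

variable {n N : ℕ} (s : Fin N → (Fin n → ℝ)) (φ : Fin n → ℝ)

lemma lower (hN : 0 < N) (δ' : ℝ) (hδ' : 0 ≤ δ') {Q : Measure (Fin n → ℝ)}
    (hQ : IsProbabilityMeasure Q) {π : Measure ((Fin n → ℝ) × (Fin n → ℝ))}
    (hπ : IsProbabilityMeasure π)
    (h1 : π.map Prod.fst = Q) (h2 : π.map Prod.snd = empiricalMeasure s)
    (hcost : transportCost π ≤ ENNReal.ofReal δ')
    (hi1 : Integrable (fun x => eDot φ x) Q)
    (hi2 : Integrable (fun x => (eDot φ x) ^ 2) Q) :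
    Real.sqrt (Vemp s φ) ≤
      Real.sqrt ((∫ x, (eDot φ x) ^ 2 ∂Q) - (∫ x, eDot φ x ∂Q) ^ 2)
        + Real.sqrt (∑ i, φ i ^ 2) * Real.sqrt δ' := by
  classical
  set nsq : ℝ := ∑ i, φ i ^ 2 with hnsq_def
  have hnsq0 : 0 ≤ nsq := Finset.sum_nonneg fun i _ => sq_nonneg _
  set f : (Fin n → ℝ) × (Fin n → ℝ) → ℝ := fun p => eDot φ p.1 with hf_def
  set g : (Fin n → ℝ) × (Fin n → ℝ) → ℝ := fun p => eDot φ p.2 with hg_def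
  have hmf : Measurable f := (measurable_eDot φ).comp measurable_fst
  have hmg : Measurable g := (measurable_eDot φ).comp measurable_snd
  -- transfer of integrals through the first marginal
  have hEf : ∫ p, f p ∂π = ∫ x, eDot φ x ∂Q := by
    rw [← h1, integral_map measurable_fst.aemeasurable (measurable_eDot φ).aestronglyMeasurable]
  have hEf2 : ∫ p, f p ^ 2 ∂π = ∫ x, (eDot φ x) ^ 2 ∂Q := by
    rw [← h1, integral_map measurable_fst.aemeasurable
      ((measurable_eDot φ).pow_const 2).aestronglyMeasurable]
  have hif : Integrable f π := by
    have := (integrable_map_measure (measurable_eDot φ).aestronglyMeasurable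
      measurable_fst.aemeasurable).mp (h1 ▸ hi1)
    exact this
  have hif2 : Integrable (fun p => f p ^ 2) π := by
    have := (integrable_map_measure ((measurable_eDot φ).pow_const 2).aestronglyMeasurable
      measurable_fst.aemeasurable).mp (h1 ▸ hi2)
    exact this
  -- transfer through the second marginal (empirical side)
  have hiQN1 : Integrable (fun x => eDot φ x) (empiricalMeasure s) :=
    myEmp_integrable hN s (measurable_eDot φ)
  have hiQN2 : Integrable (fun x => (eDot φ x) ^ 2) (empiricalMeasure s) :=
    myEmp_integrable hN s ((measurable_eDot φ).pow_const 2)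
  have hEg : ∫ p, g p ∂π = mubar s φ := by
    rw [hg_def]
    have : ∫ p, eDot φ p.2 ∂π = ∫ x, eDot φ x ∂(empiricalMeasure s) := by
      rw [← h2, integral_map measurable_snd.aemeasurable (measurable_eDot φ).aestronglyMeasurable]
    rw [this, show empiricalMeasure s = myEmp s from rfl,
      myEmp_integral _ (measurable_eDot φ), mubar]
  have hEg2 : ∫ p, g p ^ 2 ∂π = (mubar s φ) ^ 2 + Vemp s φ := by
    have : ∫ p, g p ^ 2 ∂π = ∫ x, (eDot φ x) ^ 2 ∂(empiricalMeasure s) := by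
      rw [hg_def, ← h2, integral_map measurable_snd.aemeasurable
        ((measurable_eDot φ).pow_const 2).aestronglyMeasurable]
    rw [this, show empiricalMeasure s = myEmp s from rfl,
      myEmp_integral _ ((measurable_eDot φ).pow_const 2)]
    have e : ∀ i : Fin N, (eDot φ (s i)) ^ 2
        = (mubar s φ + 1 * (eDot φ (s i) - mubar s φ)) ^ 2 := fun i => by ring
    rw [Finset.sum_congr rfl fun i _ => e i, quad s φ hN]
    ring
  have hig : Integrable g π := by
    have := (integrable_map_measure (measurable_eDot φ).aestronglyMeasurable
      measurable_snd.aemeasurable).mp (h2 ▸ hiQN1)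
    exact this
  have hig2 : Integrable (fun p => g p ^ 2) π := by
    have := (integrable_map_measure ((measurable_eDot φ).pow_const 2).aestronglyMeasurable
      measurable_snd.aemeasurable).mp (h2 ▸ hiQN2)
    exact this
  -- difference function and cost bound
  set h : (Fin n → ℝ) × (Fin n → ℝ) → ℝ := fun p => g p - f p with hh_def
  have hmh : Measurable h := hmg.sub hmf
  have hih : Integrable h π := hig.sub hif
  have hpt : ∀ p : (Fin n → ℝ) × (Fin n → ℝ),
      h p ^ 2 ≤ nsq * ∑ j, (p.1 j - p.2 j) ^ 2 := by
    intro p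
    have hhp : h p = ∑ j, φ j * (p.2 j - p.1 j) := by
      simp only [hh_def, hg_def, hf_def, eDot]
      rw [← Finset.sum_sub_distrib]
      exact Finset.sum_congr rfl fun j _ => by ring
    have hcs := Finset.sum_mul_sq_le_sq_mul_sq Finset.univ φ (fun j => p.2 j - p.1 j)
    have e : ∑ j, (p.2 j - p.1 j) ^ 2 = ∑ j, (p.1 j - p.2 j) ^ 2 :=
      Finset.sum_congr rfl fun j _ => by ring
    calc h p ^ 2 = (∑ j, φ j * (p.2 j - p.1 j)) ^ 2 := by rw [hhp]
      _ ≤ (∑ j, φ j ^ 2) * ∑ j, (p.2 j - p.1 j) ^ 2 := hcs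
      _ = nsq * ∑ j, (p.1 j - p.2 j) ^ 2 := by rw [e, ← hnsq_def]
  have hchain : ∫⁻ p, ENNReal.ofReal (h p ^ 2) ∂π ≤ ENNReal.ofReal (nsq * δ') := by
    have hcm : Measurable fun p : (Fin n → ℝ) × (Fin n → ℝ) =>
        ENNReal.ofReal (∑ j, (p.1 j - p.2 j) ^ 2) := by
      refine ENNReal.measurable_ofReal.comp (Finset.measurable_sum _ fun j _ => ?_)
      exact (((measurable_pi_apply j).comp measurable_fst).sub
        ((measurable_pi_apply j).comp measurable_snd)).pow_const 2
    calc ∫⁻ p, ENNReal.ofReal (h p ^ 2) ∂π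
        ≤ ∫⁻ p, ENNReal.ofReal nsq * ENNReal.ofReal (∑ j, (p.1 j - p.2 j) ^ 2) ∂π := by
          refine lintegral_mono fun p => ?_
          rw [← ENNReal.ofReal_mul hnsq0]
          exact ENNReal.ofReal_le_ofReal (hpt p)
      _ = ENNReal.ofReal nsq * ∫⁻ p, ENNReal.ofReal (∑ j, (p.1 j - p.2 j) ^ 2) ∂π :=
          lintegral_const_mul _ hcm
      _ ≤ ENNReal.ofReal nsq * ENNReal.ofReal δ' := mul_le_mul_right hcost _
      _ = ENNReal.ofReal (nsq * δ') := (ENNReal.ofReal_mul hnsq0).symm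
  have hih2 : Integrable (fun p => h p ^ 2) π := by
    refine ⟨(hmh.pow_const 2).aestronglyMeasurable, ?_⟩
    rw [HasFiniteIntegral]
    have e : ∀ p, ‖h p ^ 2‖ₑ = ENNReal.ofReal (h p ^ 2) := fun p => by
      rw [← ofReal_norm, Real.norm_eq_abs, abs_of_nonneg (sq_nonneg _)]
    calc ∫⁻ p, ‖h p ^ 2‖ₑ ∂π = ∫⁻ p, ENNReal.ofReal (h p ^ 2) ∂π := by
          exact lintegral_congr fun p => e p
      _ ≤ ENNReal.ofReal (nsq * δ') := hchain
      _ < ⊤ := ENNReal.ofReal_lt_top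
  have hB : ∫ p, h p ^ 2 ∂π ≤ nsq * δ' := by
    rw [integral_eq_lintegral_of_nonneg_ae (Filter.Eventually.of_forall fun p => sq_nonneg _)
      (hmh.pow_const 2).aestronglyMeasurable]
    exact ENNReal.toReal_le_of_le_ofReal (by positivity) hchain
  -- the three variances
  set α : ℝ := ∫ x, eDot φ x ∂Q with hα_def
  set m : ℝ := mubar s φ - α with hm_def
  have hEh : ∫ p, h p ∂π = m := by
    rw [hh_def]
    have : ∫ p, (g p - f p) ∂π = (∫ p, g p ∂π) - ∫ p, f p ∂π := integral_sub hig hif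
    rw [this, hEg, hEf, hm_def]
  -- expansions
  have hu2int : Integrable (fun p => (f p - α) ^ 2) π := by
    have e : (fun p => (f p - α) ^ 2) = fun p => f p ^ 2 - 2 * α * f p + α ^ 2 := by
      funext p; ring
    rw [e]
    exact ((hif2.sub (hif.const_mul (2 * α))).add (integrable_const _))
  have hv2int : Integrable (fun p => (h p - m) ^ 2) π := by
    have e : (fun p => (h p - m) ^ 2) = fun p => h p ^ 2 - 2 * m * h p + m ^ 2 := by
      funext p; ring
    rw [e]
    exact ((hih2.sub (hih.const_mul (2 * m))).add (integrable_const _))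
  have hEu2 : ∫ p, (f p - α) ^ 2 ∂π = (∫ x, (eDot φ x) ^ 2 ∂Q) - α ^ 2 := by
    rw [expand_sq hif hif2 α, hEf2, hEf]; ring
  have hEv2 : ∫ p, (h p - m) ^ 2 ∂π ≤ nsq * δ' := by
    rw [expand_sq hih hih2 m, hEh]
    nlinarith [hB, sq_nonneg m]
  have hEv2' : 0 ≤ ∫ p, (h p - m) ^ 2 ∂π := integral_nonneg fun p => sq_nonneg _
  have hsum : ∫ p, ((f p - α) + (h p - m)) ^ 2 ∂π = Vemp s φ := by
    have e : ∀ p, ((f p - α) + (h p - m)) ^ 2 = (g p - mubar s φ) ^ 2 := by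
      intro p; rw [hh_def, hm_def]; ring
    rw [integral_congr_ae (Filter.Eventually.of_forall e), expand_sq hig hig2 (mubar s φ), hEg2,
      hEg]
    ring
  -- triangle inequality
  have tri := myTri (μ := π) (u := fun p => f p - α) (v := fun p => h p - m) ((hmf.sub measurable_const).aestronglyMeasurable)
    ((hmh.sub measurable_const).aestronglyMeasurable) hu2int hv2int
  rw [hsum, hEu2] at tri
  have last : Real.sqrt (∫ p, (h p - m) ^ 2 ∂π) ≤ Real.sqrt nsq * Real.sqrt δ' := by
    calc Real.sqrt (∫ p, (h p - m) ^ 2 ∂π) ≤ Real.sqrt (nsq * δ') := Real.sqrt_le_sqrt hEv2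
      _ = Real.sqrt nsq * Real.sqrt δ' := Real.sqrt_mul hnsq0 δ'
  calc Real.sqrt (Vemp s φ)
      ≤ Real.sqrt ((∫ x, (eDot φ x) ^ 2 ∂Q) - α ^ 2) + Real.sqrt (∫ p, (h p - m) ^ 2 ∂π) :=
        tri
    _ ≤ Real.sqrt ((∫ x, (eDot φ x) ^ 2 ∂Q) - α ^ 2) + Real.sqrt nsq * Real.sqrt δ' := by
        linarith [last]

end Lower

section Lower2

variable {n N : ℕ} (s : Fin N → (Fin n → ℝ)) (φ : Fin n → ℝ)

lemma lower2 (hN : 0 < N) {δ : ℝ} (hδ : 0 < δ) {Q : Measure (Fin n → ℝ)}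
    (hQ : IsProbabilityMeasure Q)
    (hot : otCost Q (empiricalMeasure s) ≤ ENNReal.ofReal δ)
    (hi1 : Integrable (fun x => eDot φ x) Q)
    (hi2 : Integrable (fun x => (eDot φ x) ^ 2) Q) :
    Real.sqrt (Vemp s φ) ≤
      Real.sqrt ((∫ x, (eDot φ x) ^ 2 ∂Q) - (∫ x, eDot φ x ∂Q) ^ 2)
        + Real.sqrt (∑ i, φ i ^ 2) * Real.sqrt δ := by
  set nsq : ℝ := ∑ i, φ i ^ 2 with hnsq_def
  have hnsq0 : 0 ≤ nsq := Finset.sum_nonneg fun i _ => sq_nonneg _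
  -- key: for every ε > 0 there is a coupling of cost at most δ + ε
  have key : ∀ ε : ℝ, 0 < ε →
      Real.sqrt (Vemp s φ) ≤
        Real.sqrt ((∫ x, (eDot φ x) ^ 2 ∂Q) - (∫ x, eDot φ x ∂Q) ^ 2)
          + Real.sqrt nsq * Real.sqrt (δ + ε) := by
    intro ε hε
    have hlt : otCost Q (empiricalMeasure s) < ENNReal.ofReal (δ + ε) :=
      lt_of_le_of_lt hot (by
        rw [ENNReal.ofReal_lt_ofReal_iff (by linarith)]
        linarith)
    rw [otCost] at hlt
    obtain ⟨r, hr_mem, hr_lt⟩ := sInf_lt_iff.mp hlt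
    obtain ⟨π, hπ, h1, h2, rfl⟩ := hr_mem
    exact lower s φ hN (δ + ε) (by linarith) hQ hπ h1 h2 hr_lt.le hi1 hi2
  -- pass to the limit ε → 0
  refine le_of_forall_pos_le_add fun η hη => ?_
  rcases eq_or_lt_of_le (Real.sqrt_nonneg nsq) with hz | hz
  · have h1 := key 1 one_pos
    rw [← hz] at h1 ⊢
    simp only [zero_mul, add_zero] at h1 ⊢
    linarith
  · set ε : ℝ := (η / Real.sqrt nsq) ^ 2 with hε_def
    have hε : 0 < ε := by positivity
    have h1 := key ε hε
    have h2 : Real.sqrt (δ + ε) ≤ Real.sqrt δ + Real.sqrt ε := sqrt_add_le' hδ.le hε.le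
    have h3 : Real.sqrt ε = η / Real.sqrt nsq := by
      rw [hε_def, Real.sqrt_sq (by positivity)]
    have h4 : Real.sqrt nsq * Real.sqrt ε = η := by
      rw [h3, mul_div_cancel₀ _ hz.ne']
    nlinarith [h1, h2, hz, Real.sqrt_nonneg nsq]
  done

lemma mem_lb (hN : 0 < N) {δ : ℝ} (hδ : 0 < δ) (α v : ℝ)
    (hv : ∃ Q : Measure (Fin n → ℝ), IsProbabilityMeasure Q ∧
      otCost Q (empiricalMeasure s) ≤ ENNReal.ofReal δ ∧
      Integrable (fun x => eDot φ x) Q ∧ Integrable (fun x => (eDot φ x) ^ 2) Q ∧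
      (∫ x, eDot φ x ∂Q) = α ∧ v = (∫ x, (eDot φ x) ^ 2 ∂Q) - α ^ 2) :
    (max (Real.sqrt (Vemp s φ) - Real.sqrt δ * Real.sqrt (∑ i, φ i ^ 2)) 0) ^ 2 ≤ v := by
  obtain ⟨Q, hQ, hot, hi1, hi2, hα, rfl⟩ := hv
  have hvar0 : 0 ≤ (∫ x, (eDot φ x) ^ 2 ∂Q) - α ^ 2 := by
    have := var_nonneg (μ := Q) hi1 hi2
    rw [hα] at this
    linarith
  have hlow := lower2 s φ hN hδ hQ hot hi1 hi2
  rw [hα] at hlow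
  set Var : ℝ := (∫ x, (eDot φ x) ^ 2 ∂Q) - α ^ 2 with hVar_def
  have h1 : Real.sqrt (Vemp s φ) - Real.sqrt δ * Real.sqrt (∑ i, φ i ^ 2) ≤ Real.sqrt Var := by
    have : Real.sqrt (∑ i, φ i ^ 2) * Real.sqrt δ = Real.sqrt δ * Real.sqrt (∑ i, φ i ^ 2) :=
      mul_comm _ _
    linarith [hlow, this]
  have h2 : max (Real.sqrt (Vemp s φ) - Real.sqrt δ * Real.sqrt (∑ i, φ i ^ 2)) 0
      ≤ Real.sqrt Var := max_le h1 (Real.sqrt_nonneg _)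
  calc (max (Real.sqrt (Vemp s φ) - Real.sqrt δ * Real.sqrt (∑ i, φ i ^ 2)) 0) ^ 2
      ≤ Real.sqrt Var ^ 2 := by
        apply pow_le_pow_left₀ (le_max_right _ _) h2
    _ = Var := Real.sq_sqrt hvar0

end Lower2

section Final

variable {n N : ℕ} (s : Fin N → (Fin n → ℝ)) (φ : Fin n → ℝ)

lemma partB (hN : 0 < N) (hφ : φ ≠ 0) {δ : ℝ} (hδ : 0 < δ) :
    innerBest s φ δ (mubar s φ)
      = (max (Real.sqrt (Vemp s φ) - Real.sqrt δ * Real.sqrt (∑ i, φ i ^ 2)) 0) ^ 2 := by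
  classical
  have hnsq : 0 < ∑ i, φ i ^ 2 := nsq_pos φ hφ
  have hV0 : 0 ≤ Vemp s φ := Vemp_nonneg s φ
  set nsq : ℝ := ∑ i, φ i ^ 2 with hnsq_def
  set V : ℝ := Vemp s φ with hV_def
  set M : ℝ := (max (Real.sqrt V - Real.sqrt δ * Real.sqrt nsq) 0) ^ 2 with hM_def
  set t : ℝ := if V ≤ δ * nsq then 1 else Real.sqrt (δ * nsq) / Real.sqrt V with ht_def
  have hδn0 : 0 ≤ δ * nsq := by positivity
  have hcost : (0:ℝ) ^ 2 + (-t) ^ 2 * V ≤ δ * nsq := by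
    by_cases hc : V ≤ δ * nsq
    · rw [ht_def, if_pos hc]
      norm_num
      linarith
    · have hV : δ * nsq < V := not_le.mp hc
      have hVpos : 0 < V := lt_of_le_of_lt hδn0 hV
      rw [ht_def, if_neg hc]
      have ht2 : (-(Real.sqrt (δ * nsq) / Real.sqrt V)) ^ 2 = (δ * nsq) / V := by
        rw [neg_pow, div_pow, Real.sq_sqrt hδn0, Real.sq_sqrt hVpos.le]
        norm_num
      rw [ht2]
      rw [div_mul_eq_mul_div, mul_div_assoc, div_self hVpos.ne', mul_one]
      norm_num
  obtain ⟨Q, hQp, hot, hi1, hi2, hmean, hsq⟩ :=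
    construct s φ hN hφ δ 0 (-t) hδ.le (by simpa using hcost)
  have hM' : (1 + -t) ^ 2 * V = M := by
    by_cases hc : V ≤ δ * nsq
    · have ht1 : t = 1 := by rw [ht_def, if_pos hc]
      have hle : Real.sqrt V ≤ Real.sqrt δ * Real.sqrt nsq := by
        rw [← Real.sqrt_mul hδ.le]
        exact Real.sqrt_le_sqrt hc
      rw [ht1, hM_def, max_eq_right (by linarith : Real.sqrt V - Real.sqrt δ * Real.sqrt nsq ≤ 0)]
      norm_num
    · have hV : δ * nsq < V := not_le.mp hc
      have hVpos : 0 < V := lt_of_le_of_lt hδn0 hV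
      have hsV : (0:ℝ) < Real.sqrt V := Real.sqrt_pos.mpr hVpos
      have ht : t = Real.sqrt (δ * nsq) / Real.sqrt V := by rw [ht_def, if_neg hc]
      have hVV : Real.sqrt V ^ 2 = V := Real.sq_sqrt hVpos.le
      have e1 : 1 + -t = (Real.sqrt V - Real.sqrt (δ * nsq)) / Real.sqrt V := by
        rw [ht]
        field_simp
        ring
      have hge : Real.sqrt (δ * nsq) ≤ Real.sqrt V := Real.sqrt_le_sqrt hV.le
      have hmax : max (Real.sqrt V - Real.sqrt δ * Real.sqrt nsq) 0
          = Real.sqrt V - Real.sqrt (δ * nsq) := by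
        rw [Real.sqrt_mul hδ.le]
        exact max_eq_left (by rw [← Real.sqrt_mul hδ.le]; linarith)
      rw [e1, div_pow, hVV, div_mul_cancel₀ _ hVpos.ne', hM_def, hmax]
  have hmem : M ∈ { v | ∃ Q : Measure (Fin n → ℝ), IsProbabilityMeasure Q ∧
      otCost Q (empiricalMeasure s) ≤ ENNReal.ofReal δ ∧
      Integrable (fun x => eDot φ x) Q ∧ Integrable (fun x => (eDot φ x) ^ 2) Q ∧
      (∫ x, eDot φ x ∂Q) = mubar s φ ∧
      v = (∫ x, (eDot φ x) ^ 2 ∂Q) - (mubar s φ) ^ 2 } := by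
    refine ⟨Q, hQp, hot, hi1, hi2, by rw [hmean]; ring, ?_⟩
    rw [hsq, ← hM']
    ring
  have hlb : ∀ b ∈ { v | ∃ Q : Measure (Fin n → ℝ), IsProbabilityMeasure Q ∧
      otCost Q (empiricalMeasure s) ≤ ENNReal.ofReal δ ∧
      Integrable (fun x => eDot φ x) Q ∧ Integrable (fun x => (eDot φ x) ^ 2) Q ∧
      (∫ x, eDot φ x ∂Q) = mubar s φ ∧
      v = (∫ x, (eDot φ x) ^ 2 ∂Q) - (mubar s φ) ^ 2 }, M ≤ b :=
    fun b hb => mem_lb s φ hN hδ (mubar s φ) b hb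
  rw [innerBest]
  exact le_antisymm (csInf_le ⟨M, hlb⟩ hmem) (le_csInf ⟨M, hmem⟩ hlb)

end Final

/-- **Best-case inner and middle problem (Proposition 2.1).**
With empirical mean `s̄`, `μ̄ = φ·s̄ ≥ α₀` and empirical variance `V = φᵀΣφ`,
the minimum over all `α ≥ α₀` with `(α − μ̄)² ≤ δ‖φ‖₂²` of the best-case
portfolio variance `inf{ E^Q[(φ·S)²] − α² : Q ∈ U_δ(Q_N), E^Q[φ·S] = α }`
equals `max(√(φᵀΣφ) − √δ·‖φ‖₂, 0)²`, and the outer minimum is attained at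
`α* = μ̄`. -/
theorem stmt_6 {n N : ℕ} (hN : 0 < N) (s : Fin N → (Fin n → ℝ))
    (φ : Fin n → ℝ) (hφ : φ ≠ 0) (δ : ℝ) (hδ : 0 < δ) (α₀ : ℝ) :
    let sbar : Fin n → ℝ := fun j => (N : ℝ)⁻¹ * ∑ i, s i j
    let μbar : ℝ := eDot φ sbar
    let V : ℝ := (N : ℝ)⁻¹ * ∑ i, (eDot φ (s i) - μbar) ^ 2
    let nsq : ℝ := ∑ i, φ i ^ 2
    α₀ ≤ μbar →
    (sInf { v | ∃ α : ℝ, α₀ ≤ α ∧ (α - μbar) ^ 2 ≤ δ * nsq ∧ v = innerBest s φ δ α }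
        = (max (Real.sqrt V - Real.sqrt δ * Real.sqrt nsq) 0) ^ 2 ∧
      innerBest s φ δ μbar
        = (max (Real.sqrt V - Real.sqrt δ * Real.sqrt nsq) 0) ^ 2) := by
  intro sbar μbar V nsq hα₀
  have hnsqe : nsq = ∑ i, φ i ^ 2 := rfl
  have hμ : μbar = mubar s φ := by
    show eDot φ sbar = mubar s φ
    rw [mubar]
    simp only [eDot]
    show (∑ j, φ j * ((N : ℝ)⁻¹ * ∑ i, s i j)) = (N : ℝ)⁻¹ * ∑ i, ∑ j, φ j * s i j
    simp_rw [Finset.mul_sum]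
    rw [Finset.sum_comm]
    exact Finset.sum_congr rfl fun i _ => Finset.sum_congr rfl fun j _ => by ring
  have hVe : V = Vemp s φ := by
    show ((N : ℝ)⁻¹ * ∑ i, (eDot φ (s i) - μbar) ^ 2) = Vemp s φ
    rw [hμ, Vemp]
  have hnsq : 0 < ∑ i, φ i ^ 2 := nsq_pos φ hφ
  rw [hμ] at hα₀
  rw [hμ, hVe, hnsqe]
  constructor
  · set M : ℝ := (max (Real.sqrt (Vemp s φ) - Real.sqrt δ * Real.sqrt (∑ i, φ i ^ 2)) 0) ^ 2
      with hM_def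
    have hOlb : ∀ b ∈ { v | ∃ α : ℝ, α₀ ≤ α ∧ (α - mubar s φ) ^ 2 ≤ δ * ∑ i, φ i ^ 2 ∧
        v = innerBest s φ δ α }, M ≤ b := by
      rintro b ⟨α, hα1, hα2, rfl⟩
      rw [innerBest]
      refine le_csInf ?_ fun b hb => mem_lb s φ hN hδ α b hb
      obtain ⟨Q, hQp, hot, hi1, hi2, hmean, hsq⟩ :=
        construct s φ hN hφ δ (α - mubar s φ) 0 hδ.le (by
          simpa using hα2)
      exact ⟨(∫ x, (eDot φ x) ^ 2 ∂Q) - α ^ 2, Q, hQp, hot, hi1, hi2, by rw [hmean]; ring, rfl⟩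
    have hOmem : M ∈ { v | ∃ α : ℝ, α₀ ≤ α ∧ (α - mubar s φ) ^ 2 ≤ δ * ∑ i, φ i ^ 2 ∧
        v = innerBest s φ δ α } := by
      refine ⟨mubar s φ, hα₀, by simp; positivity, (partB s φ hN hφ hδ).symm⟩
    exact le_antisymm (csInf_le ⟨M, hOlb⟩ hOmem) (le_csInf ⟨M, hOmem⟩ hOlb)
  · exact partB s φ hN hφ hδ
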